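/- For the two-term formula with k = 6 and β₁ = 40: the complex number 2/(((40+i)/(40−i))^{32} + i) + i is real and negative, and equals −38035138859000075702655846657186322249216830232319 / 2634699316100146880926635665506082395762836079845121. -/

import Mathlib

open Complex

theorem beta2_value_k6 :
    (2 / ((((40 : ℂ) + Complex.I) / ((40 : ℂ) - Complex.I)) ^ (32 : ℕ) + Complex.I)
        + Complex.I).im = 0 ∧
    (2 / ((((40 : ℂ) + Complex.I) / ((40 : ℂ) - Complex.I)) ^ (32 : ℕ) + Complex.I)
        + Complex.I).re < 0 ∧
    2 / ((((40 : ℂ) + Complex.I) / ((40 : ℂ) - Complex.I)) ^ (32 : ℕ) + Complex.I)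
        + Complex.I
      = -((38035138859000075702655846657186322249216830232319 : ℂ) / (2634699316100146880926635665506082395762836079845121 : ℂ)) := by
  set A : ℂ := 1298332088620573402611989909424448036756809624806401
  set B : ℂ := 1336367227479573478314645756081634359006026455038720
  have hp : ((40 : ℂ) + Complex.I) ^ (32 : ℕ) = A + B * Complex.I := by
    have e2 : ((40 : ℂ) + Complex.I) ^ 2 = 1599 + 80 * Complex.I := by
      linear_combination Complex.I_sq
    have e4 : ((40 : ℂ) + Complex.I) ^ 4 = 2550401 + 255840 * Complex.I := by
      rw [show (4:ℕ) = 2*2 from rfl, pow_mul, e2]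
      linear_combination (80:ℂ)^2 * Complex.I_sq
    have e8 : ((40 : ℂ) + Complex.I) ^ 8 = 6439091155201 + 1304989183680 * Complex.I := by
      rw [show (8:ℕ) = 4*2 from rfl, pow_mul, e4]
      linear_combination (255840:ℂ)^2 * Complex.I_sq
    have e16 : ((40 : ℂ) + Complex.I) ^ 16 = 39758898135465955891008001 + 16805888620533722352639360 * Complex.I := by
      rw [show (16:ℕ) = 8*2 from rfl, pow_mul, e8]
      linear_combination (1304989183680:ℂ)^2 * Complex.I_sq
    rw [show (32:ℕ) = 16*2 from rfl, pow_mul, e16]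
    linear_combination (16805888620533722352639360:ℂ)^2 * Complex.I_sq
  have hm : ((40 : ℂ) - Complex.I) ^ (32 : ℕ) = A - B * Complex.I := by
    have e2 : ((40 : ℂ) - Complex.I) ^ 2 = 1599 - 80 * Complex.I := by
      linear_combination Complex.I_sq
    have e4 : ((40 : ℂ) - Complex.I) ^ 4 = 2550401 - 255840 * Complex.I := by
      rw [show (4:ℕ) = 2*2 from rfl, pow_mul, e2]
      linear_combination (80:ℂ)^2 * Complex.I_sq
    have e8 : ((40 : ℂ) - Complex.I) ^ 8 = 6439091155201 - 1304989183680 * Complex.I := by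
      rw [show (8:ℕ) = 4*2 from rfl, pow_mul, e4]
      linear_combination (255840:ℂ)^2 * Complex.I_sq
    have e16 : ((40 : ℂ) - Complex.I) ^ 16 = 39758898135465955891008001 - 16805888620533722352639360 * Complex.I := by
      rw [show (16:ℕ) = 8*2 from rfl, pow_mul, e8]
      linear_combination (1304989183680:ℂ)^2 * Complex.I_sq
    rw [show (32:ℕ) = 16*2 from rfl, pow_mul, e16]
    linear_combination (16805888620533722352639360:ℂ)^2 * Complex.I_sq
  have hw : A - B * Complex.I ≠ 0 := by
    intro h
    have := congrArg Complex.re h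
    simp [A, B] at this
  have key : 2 / ((((40 : ℂ) + Complex.I) / ((40 : ℂ) - Complex.I)) ^ (32 : ℕ) + Complex.I)
        + Complex.I
      = -((38035138859000075702655846657186322249216830232319 : ℂ) / (2634699316100146880926635665506082395762836079845121 : ℂ)) := by
    rw [div_pow, hp, hm]
    have hsplit : (A + B * Complex.I) / (A - B * Complex.I) + Complex.I
        = ((A + B) * (1 + Complex.I)) / (A - B * Complex.I) := by
      rw [div_add' _ _ _ hw]
      congr 1
      linear_combination (-B) * Complex.I_sq
    rw [hsplit, div_div_eq_mul_div]
    have h1 : (A + B) * (1 + Complex.I) ≠ 0 := by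
      apply mul_ne_zero
      · intro h
        have := congrArg Complex.re h
        simp [A, B] at this
        norm_num at this
      · intro h
        have := congrArg Complex.re h
        simp at this
    have hD : (2634699316100146880926635665506082395762836079845121 : ℂ) ≠ 0 := by
      intro h
      have := congrArg Complex.re h
      simp at this
    rw [div_add' _ _ _ h1, neg_div', div_eq_div_iff h1 hD]
    simp only [A, B]
    linear_combination ((1298332088620573402611989909424448036756809624806401 + 1336367227479573478314645756081634359006026455038720 : ℂ) * 2634699316100146880926635665506082395762836079845121) * Complex.I_sq
  refine ⟨?_, ?_, key⟩
  · rw [key]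
    have : -((38035138859000075702655846657186322249216830232319 : ℂ) / (2634699316100146880926635665506082395762836079845121 : ℂ))
        = ((-(38035138859000075702655846657186322249216830232319 / 2634699316100146880926635665506082395762836079845121) : ℝ) : ℂ) := by
      push_cast; ring
    rw [this, Complex.ofReal_im]
  · rw [key]
    have : -((38035138859000075702655846657186322249216830232319 : ℂ) / (2634699316100146880926635665506082395762836079845121 : ℂ))
        = ((-(38035138859000075702655846657186322249216830232319 / 2634699316100146880926635665506082395762836079845121) : ℝ) : ℂ) := by
      push_cast; ring
    rw [this, Complex.ofReal_re]
    norm_num
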